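/- The axiom system S5_n + Loc is complete with respect to the class of simplicial models: every formula of 𝓛_K that is true at every facet of every simplicial model is derivable in S5_n extended with the locality axioms Loc. -/

import Mathlib

/-! ### Chromatic simplicial complexes and Kripke frames -/

/-- A chromatic simplicial complex over the set of agents `A`, on the vertex type `V`. -/
structure CSC (A V : Type) where
  simplexes : Set (Set V)
  nonempty_mem : ∀ X ∈ simplexes, X.Nonempty
  finite_mem : ∀ X ∈ simplexes, X.Finite
  down_closed : ∀ X ∈ simplexes, ∀ Y : Set V, Y ⊆ X → Y.Nonempty → Y ∈ simplexes
  color : V → A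
  chromatic : ∀ X ∈ simplexes, Set.InjOn color X

namespace CSC

variable {A V W : Type}

/-- A vertex of the complex. -/
def IsVertex (C : CSC A V) (v : V) : Prop := {v} ∈ C.simplexes

/-- A facet: a maximal simplex. -/
def IsFacet (C : CSC A V) (X : Set V) : Prop :=
  X ∈ C.simplexes ∧ ∀ Y ∈ C.simplexes, X ⊆ Y → X = Y

/-- A pure chromatic simplicial complex of dimension `n`: all facets have `n+1` vertices. -/
def Pure (C : CSC A V) (n : ℕ) : Prop :=
  ∀ X, C.IsFacet X → X.ncard = n + 1

/-- A chromatic simplicial map: sends simplexes to simplexes and preserves colors. -/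
def IsChromMap (C : CSC A V) (D : CSC A W) (f : V → W) : Prop :=
  (∀ X ∈ C.simplexes, f '' X ∈ D.simplexes) ∧
  (∀ v, C.IsVertex v → D.color (f v) = C.color v)

/-- The type of facets of a complex. -/
def Facets (C : CSC A V) : Type := {X : Set V // C.IsFacet X}

/-- The vertices of a complex, as a type. -/
abbrev Vertices (C : CSC A V) : Type := {v : V // C.IsVertex v}

end CSC

/-- A Kripke frame over the set of agents `A` with states `S`:
a family of equivalence (indistinguishability) relations indexed by agents. -/
structure KFrame (A S : Type) where
  rel : A → S → S → Prop
  isEquiv : ∀ a, Equivalence (rel a)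

namespace KFrame

/-- A Kripke frame is proper if any two distinct states are distinguished by some agent. -/
def Proper {A S : Type} (M : KFrame A S) : Prop := ∀ s t : S, (∀ a, M.rel a s t) → s = t

/-- A morphism of Kripke frames. -/
def IsMorphism {A S T : Type} (M : KFrame A S) (N : KFrame A T) (f : S → T) : Prop :=
  ∀ a u v, M.rel a u v → N.rel a (f u) (f v)

end KFrame


lemma CSC.isVertex_of_mem {A V : Type} (C : CSC A V) {X : Set V} {v : V}
    (hX : X ∈ C.simplexes) (hv : v ∈ X) : C.IsVertex v :=
  C.down_closed X hX {v} (by simpa using hv) ⟨v, rfl⟩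

/-! ### Basic facts about pure chromatic complexes over `n+1` agents -/

namespace CSC

variable {n : ℕ} {V : Type}

lemma ncard_le_of_mem (C : CSC (Fin (n+1)) V) {X : Set V} (hX : X ∈ C.simplexes) :
    X.ncard ≤ n + 1 := by
  have h1 : (C.color '' X).ncard = X.ncard := Set.ncard_image_of_injOn (C.chromatic X hX)
  calc X.ncard = (C.color '' X).ncard := h1.symm
    _ ≤ (Set.univ : Set (Fin (n+1))).ncard :=
        Set.ncard_le_ncard (Set.subset_univ _) Set.finite_univ
    _ = n + 1 := by rw [Set.ncard_univ]; simp

/-- Every simplex of a chromatic complex over `n+1` agents is contained in a facet. -/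
lemma exists_facet_above (C : CSC (Fin (n+1)) V) :
    ∀ (k : ℕ) (X : Set V), X ∈ C.simplexes → n + 1 ≤ X.ncard + k →
      ∃ Y, C.IsFacet Y ∧ X ⊆ Y := by
  intro k
  induction k with
  | zero =>
    intro X hX hle
    refine ⟨X, ⟨hX, ?_⟩, subset_rfl⟩
    intro Y hY hXY
    exact (Set.eq_of_subset_of_ncard_le hXY
      (le_trans (C.ncard_le_of_mem hY) (by omega)) (C.finite_mem Y hY))
  | succ k ih =>
    intro X hX hle
    by_cases hf : C.IsFacet X
    · exact ⟨X, hf, subset_rfl⟩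
    · simp only [IsFacet, hX, true_and] at hf
      push_neg at hf
      obtain ⟨Y, hY, hXY, hne⟩ := hf
      have hlt : X.ncard < Y.ncard :=
        Set.ncard_lt_ncard (ssubset_of_subset_of_ne hXY hne) (C.finite_mem Y hY)
      obtain ⟨Z, hZ, hYZ⟩ := ih Y hY (by omega)
      exact ⟨Z, hZ, hXY.trans hYZ⟩

lemma mem_facet (C : CSC (Fin (n+1)) V) {X : Set V} (hX : X ∈ C.simplexes) :
    ∃ Y, C.IsFacet Y ∧ X ⊆ Y :=
  C.exists_facet_above (n+1) X hX (by omega)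

/-- In a pure complex of dimension `n` over `n+1` agents, every facet contains a vertex
of each color. -/
lemma facet_exists_color (C : CSC (Fin (n+1)) V) (hp : C.Pure n)
    {X : Set V} (hX : C.IsFacet X) (a : Fin (n+1)) : ∃ v ∈ X, C.color v = a := by
  have himg : (C.color '' X).ncard = n + 1 := by
    rw [Set.ncard_image_of_injOn (C.chromatic X hX.1)]
    exact hp X hX
  have huniv : C.color '' X = Set.univ := by
    apply Set.eq_of_subset_of_ncard_le (Set.subset_univ _) ?_ Set.finite_univ
    rw [himg, Set.ncard_univ]; simp
  have ha : a ∈ C.color '' X := by rw [huniv]; trivial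
  obtain ⟨v, hv, hc⟩ := ha
  exact ⟨v, hv, hc⟩

end CSC

/-! ### The functor F : from pure chromatic simplicial complexes to Kripke frames. -/

/-- The Kripke frame associated with a pure chromatic simplicial complex: states are the
facets, and two facets are indistinguishable by agent `a` iff they share an `a`-colored
vertex. -/
def kframeOf {n : ℕ} {V : Type} (C : CSC (Fin (n+1)) V) (hp : C.Pure n) :
    KFrame (Fin (n+1)) C.Facets where
  rel a X Y := ∃ v, v ∈ X.1 ∩ Y.1 ∧ C.color v = a
  isEquiv a := by
    constructor
    · intro X
      obtain ⟨v, hv, hc⟩ := C.facet_exists_color hp X.2 a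
      exact ⟨v, ⟨hv, hv⟩, hc⟩
    · rintro X Y ⟨v, ⟨h1, h2⟩, hc⟩
      exact ⟨v, ⟨h2, h1⟩, hc⟩
    · rintro X Y Z ⟨v, ⟨hvX, hvY⟩, hcv⟩ ⟨w, ⟨hwY, hwZ⟩, hcw⟩
      have hvw : v = w := C.chromatic Y.1 Y.2.1 hvY hwY (by rw [hcv, hcw])
      exact ⟨v, ⟨hvX, by rw [hvw]; exact hwZ⟩, hcv⟩

lemma kframeOf_proper {n : ℕ} {V : Type} (C : CSC (Fin (n+1)) V) (hp : C.Pure n) :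
    (kframeOf C hp).Proper := by
  have key : ∀ Z W : C.Facets, (∀ a, ∃ v, v ∈ Z.1 ∩ W.1 ∧ C.color v = a) → W.1 ⊆ Z.1 := by
    intro Z W hzw w hw
    obtain ⟨v, ⟨hvZ, hvW⟩, hcv⟩ := hzw (C.color w)
    have : v = w := C.chromatic W.1 W.2.1 hvW hw hcv
    exact this ▸ hvZ
  intro X Y h
  apply Subtype.ext
  apply Set.Subset.antisymm
  · apply key Y X
    intro a
    obtain ⟨v, hv, hc⟩ := h a
    exact ⟨v, ⟨hv.2, hv.1⟩, hc⟩
  · exact key X Y h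

/-! ### The epistemic language `𝓛_K` -/

/-- Epistemic formulas over agents `A` and atomic propositions `AP`:
`φ ::= p | ¬φ | (φ ∧ φ) | K_a φ`. -/
inductive Form (A AP : Type) : Type
  | atom : AP → Form A AP
  | neg : Form A AP → Form A AP
  | and : Form A AP → Form A AP → Form A AP
  | K : A → Form A AP → Form A AP

namespace Form

variable {A AP : Type}

/-- Implication, as a derived connective. -/
def imp (φ ψ : Form A AP) : Form A AP := .neg (.and φ (.neg ψ))

/-- Disjunction, as a derived connective. -/
def or (φ ψ : Form A AP) : Form A AP := .neg (.and (.neg φ) (.neg ψ))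

/-- A false formula. -/
def falsum [Inhabited AP] : Form A AP := .and (.atom default) (.neg (.atom default))

/-- A true formula. -/
def verum [Inhabited AP] : Form A AP := .neg falsum

end Form

/-- Finite disjunctions. -/
def bigOr {A AP : Type} [Inhabited AP] (l : List (Form A AP)) : Form A AP :=
  l.foldr Form.or Form.falsum

/-- Finite conjunctions. -/
def bigAnd {A AP : Type} [Inhabited AP] (l : List (Form A AP)) : Form A AP :=
  l.foldr Form.and Form.verum

/-! ### Simplicial models and their semantics.
Atomic propositions are pairs `(a, x)`: "agent `a` holds the value `x`". -/

/-- A simplicial model: a chromatic simplicial complex together with a labeling of each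
vertex by a set of atomic propositions concerning the agent coloring that vertex. -/
structure SModel (A V Val : Type) extends CSC A V where
  label : V → Set (A × Val)
  label_local : ∀ v, toCSC.IsVertex v → ∀ p ∈ label v, p.1 = color v

namespace SModel

variable {A V W Val : Type}

/-- Satisfaction of a formula at a facet of a simplicial model. -/
def sat (M : SModel A V Val) : Set V → Form A (A × Val) → Prop
  | X, .atom p => ∃ v ∈ X, p ∈ M.label v
  | X, .neg φ => ¬ M.sat X φ
  | X, .and φ ψ => M.sat X φ ∧ M.sat X ψ
  | X, .K a φ => ∀ Y, M.toCSC.IsFacet Y → (∃ v, v ∈ X ∩ Y ∧ M.color v = a) → M.sat Y φ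

/-- A morphism of simplicial models: a chromatic simplicial map preserving the labeling. -/
def IsMorphism (M : SModel A V Val) (N : SModel A W Val) (f : V → W) : Prop :=
  M.toCSC.IsChromMap N.toCSC f ∧ ∀ v, M.toCSC.IsVertex v → N.label (f v) = M.label v

end SModel

/-! ### The proof system `S5_n + Loc` -/

/-- Evaluation of a formula under a propositional assignment `b` (which may assign any
truth value to atoms and to formulas of the form `K_a φ`), interpreting `¬` and `∧`
classically. -/
def propEval {A AP : Type} (b : Form A AP → Prop) : Form A AP → Prop
  | .atom p => b (.atom p)
  | .neg φ => ¬ propEval b φ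
  | .and φ ψ => propEval b φ ∧ propEval b ψ
  | .K a φ => b (.K a φ)

/-- Derivability in `S5_n` extended with the locality axioms `Loc`:
all propositional tautologies, the `S5` axioms `K`, `T`, `4`, `5` for each agent,
the locality axioms `K_a p_{a,x} ∨ K_a ¬p_{a,x}`, closed under modus ponens and
necessitation. -/
inductive Prov {A Val : Type} : Form A (A × Val) → Prop
  | taut {φ} : (∀ b, propEval b φ) → Prov φ
  | axK (a : A) (φ ψ : Form A (A × Val)) :
      Prov (((Form.K a (φ.imp ψ)).imp ((Form.K a φ).imp (Form.K a ψ))))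
  | axT (a : A) (φ : Form A (A × Val)) : Prov ((Form.K a φ).imp φ)
  | ax4 (a : A) (φ : Form A (A × Val)) : Prov ((Form.K a φ).imp (Form.K a (Form.K a φ)))
  | ax5 (a : A) (φ : Form A (A × Val)) :
      Prov ((Form.neg (Form.K a φ)).imp (Form.K a (Form.neg (Form.K a φ))))
  | axLoc (a : A) (x : Val) :
      Prov ((Form.K a (Form.atom (a, x))).or (Form.K a (Form.neg (Form.atom (a, x)))))
  | mp {φ ψ} : Prov (φ.imp ψ) → Prov φ → Prov ψ
  | nec (a : A) {φ} : Prov φ → Prov (Form.K a φ)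

set_option linter.unusedSectionVars false

namespace S7

open Form

variable {A Val : Type}

/-- Pick an atom occurring in a formula. -/
def someAtom {A AP : Type} : Form A AP → AP
  | .atom p => p
  | .neg φ => someAtom φ
  | .and φ _ => someAtom φ
  | .K _ φ => someAtom φ

section PropTheory

variable [Inhabited (A × Val)]

local notation "F" => Form A (A × Val)

lemma eval_imp (b : F → Prop) (φ ψ : F) :
    propEval b (φ.imp ψ) ↔ (propEval b φ → propEval b ψ) := by
  simp only [Form.imp, propEval]; tauto

lemma eval_or (b : F → Prop) (φ ψ : F) :
    propEval b (φ.or ψ) ↔ (propEval b φ ∨ propEval b ψ) := by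
  simp only [Form.or, propEval]; tauto

lemma eval_falsum (b : F → Prop) : propEval b Form.falsum ↔ False := by
  simp only [Form.falsum, propEval]; tauto

lemma eval_verum (b : F → Prop) : propEval b Form.verum ↔ True := by
  simp only [Form.verum, Form.falsum, propEval]; tauto

lemma eval_bigAnd (b : F → Prop) (l : List F) :
    propEval b (bigAnd l) ↔ ∀ ψ ∈ l, propEval b ψ := by
  induction l with
  | nil => simp [bigAnd, eval_verum b]
  | cons ψ l ih =>
    simp only [bigAnd, List.foldr] at ih ⊢
    show propEval b (Form.and _ _) ↔ _
    simp only [propEval, ih, List.mem_cons]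
    constructor
    · rintro ⟨h1, h2⟩ χ (rfl | hχ); exact h1; exact h2 _ hχ
    · intro h; exact ⟨h _ (Or.inl rfl), fun χ hχ => h _ (Or.inr hχ)⟩

lemma provImp {φ ψ : F} (h : ∀ b, propEval b φ → propEval b ψ) : Prov (φ.imp ψ) :=
  Prov.taut (fun b => by rw [eval_imp]; exact h b)

lemma taut_mp {φ ψ : F} (h1 : Prov φ) (h : ∀ b, propEval b φ → propEval b ψ) : Prov ψ :=
  Prov.mp (provImp h) h1

lemma taut_mp2 {φ1 φ2 ψ : F} (h1 : Prov φ1) (h2 : Prov φ2)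
    (h : ∀ b, propEval b φ1 → propEval b φ2 → propEval b ψ) : Prov ψ := by
  have : Prov (φ2.imp ψ) := taut_mp h1 (fun b e1 => by
    rw [eval_imp]; exact h b e1)
  exact Prov.mp this h2

lemma taut_mp3 {φ1 φ2 φ3 ψ : F} (h1 : Prov φ1) (h2 : Prov φ2) (h3 : Prov φ3)
    (h : ∀ b, propEval b φ1 → propEval b φ2 → propEval b φ3 → propEval b ψ) : Prov ψ := by
  have : Prov (φ3.imp ψ) := taut_mp2 h1 h2 (fun b e1 e2 => by
    rw [eval_imp]; exact h b e1 e2)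
  exact Prov.mp this h3

/-- Derivability from a set of hypotheses. -/
def ProvFrom (Γ : Set F) (φ : F) : Prop :=
  ∃ l : List F, (∀ ψ ∈ l, ψ ∈ Γ) ∧ Prov ((bigAnd l).imp φ)

lemma provFrom_of_prov {Γ : Set F} {φ : F} (h : Prov φ) : ProvFrom Γ φ :=
  ⟨[], by simp, taut_mp h (fun b e => by rw [eval_imp]; exact fun _ => e)⟩

lemma provFrom_mem {Γ : Set F} {φ : F} (h : φ ∈ Γ) : ProvFrom Γ φ :=
  ⟨[φ], by simpa using h, provImp (fun b e => by rw [eval_bigAnd] at e; exact e φ (by simp))⟩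

lemma provFrom_mono {Γ Δ : Set F} {φ : F} (hs : Γ ⊆ Δ) (h : ProvFrom Γ φ) : ProvFrom Δ φ :=
  let ⟨l, hl, hp⟩ := h; ⟨l, fun ψ hψ => hs (hl ψ hψ), hp⟩

lemma provFrom_mp {Γ : Set F} {φ ψ : F}
    (h1 : ProvFrom Γ (φ.imp ψ)) (h2 : ProvFrom Γ φ) : ProvFrom Γ ψ := by
  obtain ⟨l1, hl1, hp1⟩ := h1
  obtain ⟨l2, hl2, hp2⟩ := h2
  refine ⟨l1 ++ l2, ?_, ?_⟩
  · intro χ hχ; rcases List.mem_append.1 hχ with h | h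
    exacts [hl1 χ h, hl2 χ h]
  · apply taut_mp2 hp1 hp2
    intro b e1 e2
    rw [eval_imp] at e1 e2 ⊢
    intro hall
    rw [eval_bigAnd] at hall
    have hA : propEval b (bigAnd l1) := by rw [eval_bigAnd]; intro χ hχ; exact hall χ (by simp [hχ])
    have hB : propEval b (bigAnd l2) := by rw [eval_bigAnd]; intro χ hχ; exact hall χ (by simp [hχ])
    have := e1 hA; rw [eval_imp] at this; exact this (e2 hB)

noncomputable local instance : DecidableEq (Form A (A × Val)) := Classical.decEq _

def Consistent (Γ : Set F) : Prop := ¬ ProvFrom Γ Form.falsum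

/-- Deduction-style lemma: if `Γ ∪ {φ}` is inconsistent then `Γ ⊢ ¬φ`. -/
lemma provFrom_neg_of_inconsistent {Γ : Set F} {φ : F}
    (h : ¬ Consistent (insert φ Γ)) : ProvFrom Γ (Form.neg φ) := by
  rw [Consistent, not_not] at h
  obtain ⟨l, hl, hp⟩ := h
  refine ⟨l.filter (fun ψ => ψ ≠ φ), ?_, ?_⟩
  · intro ψ hψ
    have hne := List.of_mem_filter hψ
    simp only [ne_eq, decide_not, Bool.not_eq_true', decide_eq_false_iff_not] at hne
    have hmem := List.mem_of_mem_filter hψ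
    rcases Set.mem_insert_iff.1 (hl ψ hmem) with h' | h'
    · exact absurd h' hne
    · exact h'
  · apply taut_mp hp
    intro b e
    rw [eval_imp] at e ⊢
    rw [eval_falsum] at e
    intro hall
    show ¬ _
    intro hφ
    apply e
    rw [eval_bigAnd] at hall ⊢
    intro χ hχ
    by_cases hc : χ = φ
    · exact hc ▸ hφ
    · exact hall χ (List.mem_filter.2 ⟨hχ, by simp [hc]⟩)

def MCS (Γ : Set F) : Prop := Consistent Γ ∧ ∀ φ : F, φ ∈ Γ ∨ Form.neg φ ∈ Γ

lemma MCS.not_both {Γ : Set F} (h : MCS Γ) {φ : F} (h1 : φ ∈ Γ) (h2 : Form.neg φ ∈ Γ) : False := by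
  apply h.1
  apply provFrom_mp (φ := φ) _ (provFrom_mem h1)
  apply provFrom_mp (φ := Form.neg φ) _ (provFrom_mem h2)
  exact provFrom_of_prov (Prov.taut (fun b => by
    rw [eval_imp, eval_imp, eval_falsum]
    exact fun hn hφ => (hn hφ).elim))

lemma MCS.closed {Γ : Set F} (h : MCS Γ) {φ : F} (hp : ProvFrom Γ φ) : φ ∈ Γ := by
  rcases h.2 φ with h' | h'
  · exact h'
  · exfalso
    apply h.1
    apply provFrom_mp _ hp
    apply provFrom_mp (φ := Form.neg φ) _ (provFrom_mem h')
    exact provFrom_of_prov (Prov.taut (fun b => by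
      rw [eval_imp, eval_imp, eval_falsum]
      exact fun hn hφ => (hn hφ).elim))

lemma MCS.mem_of_prov {Γ : Set F} (h : MCS Γ) {φ : F} (hp : Prov φ) : φ ∈ Γ :=
  h.closed (provFrom_of_prov hp)

lemma MCS.neg_mem_iff {Γ : Set F} (h : MCS Γ) {φ : F} : Form.neg φ ∈ Γ ↔ φ ∉ Γ := by
  constructor
  · intro h1 h2; exact h.not_both h2 h1
  · intro h1; rcases h.2 φ with h' | h'; exact absurd h' h1; exact h'

lemma MCS.and_mem_iff {Γ : Set F} (h : MCS Γ) {φ ψ : F} :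
    Form.and φ ψ ∈ Γ ↔ φ ∈ Γ ∧ ψ ∈ Γ := by
  constructor
  · intro h1
    constructor
    · exact h.closed (provFrom_mp (provFrom_of_prov (provImp (fun b e => by
        exact (show propEval b (Form.and φ ψ) from e).1))) (provFrom_mem h1))
    · exact h.closed (provFrom_mp (provFrom_of_prov (provImp (fun b e => by
        exact (show propEval b (Form.and φ ψ) from e).2))) (provFrom_mem h1))
  · rintro ⟨h1, h2⟩
    apply h.closed
    apply provFrom_mp _ (provFrom_mem h2)
    apply provFrom_mp _ (provFrom_mem h1)
    exact provFrom_of_prov (Prov.taut (fun b => by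
      rw [eval_imp, eval_imp]
      exact fun e1 e2 => ⟨e1, e2⟩))

lemma MCS.mp {Γ : Set F} (h : MCS Γ) {φ ψ : F} (h1 : φ.imp ψ ∈ Γ) (h2 : φ ∈ Γ) : ψ ∈ Γ :=
  h.closed (provFrom_mp (provFrom_mem h1) (provFrom_mem h2))

/-- Lindenbaum's lemma, via Zorn. -/
lemma lindenbaum {Γ : Set F} (h : Consistent Γ) : ∃ Δ, Γ ⊆ Δ ∧ MCS Δ := by
  obtain ⟨Δ, hΔ, hmax⟩ := zorn_subset_nonempty {Δ : Set F | Consistent Δ}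
    (fun c hc hchain ⟨Θ, hΘ⟩ => by
      refine ⟨⋃₀ c, ?_, fun Δ hΔ => Set.subset_sUnion_of_mem hΔ⟩
      intro ⟨l, hl, hp⟩
      -- find a single member of the chain containing all of l
      have : ∃ Δ ∈ c, ∀ ψ ∈ l, ψ ∈ Δ := by
        clear hp
        induction l with
        | nil => exact ⟨Θ, hΘ, by simp⟩
        | cons ψ l ih =>
          obtain ⟨Δ, hΔc, hΔ⟩ := ih (fun χ hχ => hl χ (by simp [hχ]))
          obtain ⟨Δ', hΔ'c, hψ⟩ := hl ψ (by simp)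
          rcases hchain.total hΔc hΔ'c with hss | hss
          · exact ⟨Δ', hΔ'c, fun χ hχ => by
              rcases List.mem_cons.1 hχ with rfl | hχ
              · exact hψ
              · exact hss (hΔ χ hχ)⟩
          · exact ⟨Δ, hΔc, fun χ hχ => by
              rcases List.mem_cons.1 hχ with rfl | hχ
              · exact hss hψ
              · exact hΔ χ hχ⟩
      obtain ⟨Δ, hΔc, hall⟩ := this
      exact hc hΔc ⟨l, hall, hp⟩) Γ h
  refine ⟨Δ, hΔ, hmax.prop, ?_⟩
  intro φ
  by_contra hcon
  push_neg at hcon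
  obtain ⟨h1, h2⟩ := hcon
  have c1 : ¬ Consistent (insert φ Δ) := by
    intro hcons
    have := hmax.2 hcons (Set.subset_insert _ _)
    exact h1 (this (Set.mem_insert _ _))
  have c2 : ¬ Consistent (insert (Form.neg φ) Δ) := by
    intro hcons
    have := hmax.2 hcons (Set.subset_insert _ _)
    exact h2 (this (Set.mem_insert _ _))
  have p1 := provFrom_neg_of_inconsistent c1
  have p2 := provFrom_neg_of_inconsistent c2
  apply hmax.prop
  apply provFrom_mp _ p2
  apply provFrom_mp _ p1
  exact provFrom_of_prov (Prov.taut (fun b => by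
    rw [eval_imp, eval_imp, eval_falsum]
    intro e1 e2
    exact e2 e1))

end PropTheory

end S7
namespace S7
section Modal

variable {A Val : Type} [Inhabited (A × Val)]

local notation "F" => Form A (A × Val)

/-- K distributes over implication (usable form). -/
lemma prov_K_mp {a : A} {φ ψ : F} (h1 : Prov (Form.K a (φ.imp ψ))) (h2 : Prov (Form.K a φ)) :
    Prov (Form.K a ψ) :=
  Prov.mp (Prov.mp (Prov.axK a φ ψ) h1) h2

lemma prov_K_and {a : A} {φ ψ : F} (h1 : Prov (Form.K a φ)) (h2 : Prov (Form.K a ψ)) :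
    Prov (Form.K a (Form.and φ ψ)) := by
  have t : Prov (Form.K a (φ.imp (ψ.imp (Form.and φ ψ)))) :=
    Prov.nec a (Prov.taut (fun b => by
      rw [eval_imp, eval_imp]; exact fun e1 e2 => ⟨e1, e2⟩))
  exact prov_K_mp (prov_K_mp t h1) h2

/-- `⊢ K a (bigAnd l) ` from `⊢ K a ψ` for all `ψ ∈ l` — in implication form:
`⊢ bigAnd (l.map (K a)) → K a (bigAnd l)`. -/
lemma prov_bigAnd_K (a : A) (l : List F) :
    Prov ((bigAnd (l.map (Form.K a))).imp (Form.K a (bigAnd l))) := by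
  induction l with
  | nil =>
    have hv : Prov (Form.K a (bigAnd ([] : List F))) :=
      Prov.nec a (Prov.taut (fun b => (eval_bigAnd b []).2 (by simp)))
    exact taut_mp hv (fun b e => by rw [eval_imp]; exact fun _ => e)
  | cons ψ l ih =>
    -- bigAnd ((ψ::l).map K) = K ψ ∧ bigAnd (l.map K)
    -- target: (K ψ ∧ bigAnd (map K l)) → K (ψ ∧ bigAnd l)
    have dist : Prov ((Form.K a ψ).imp ((Form.K a (bigAnd l)).imp
        (Form.K a (Form.and ψ (bigAnd l))))) := by
      have t : Prov (Form.K a (ψ.imp ((bigAnd l).imp (Form.and ψ (bigAnd l))))) :=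
        Prov.nec a (Prov.taut (fun b => by
          rw [eval_imp, eval_imp]; exact fun e1 e2 => ⟨e1, e2⟩))
      have h1 := Prov.mp (Prov.axK a ψ ((bigAnd l).imp (Form.and ψ (bigAnd l)))) t
      -- h1 : K ψ → K (bigAnd l → ψ ∧ bigAnd l)
      apply taut_mp2 h1 (Prov.axK a (bigAnd l) (Form.and ψ (bigAnd l)))
      intro b e1 e2
      rw [eval_imp] at e1 e2
      rw [eval_imp]; intro k1; rw [eval_imp]; intro k2
      have h3 := e2 (e1 k1)
      rw [eval_imp] at h3
      exact h3 k2
    apply taut_mp2 dist ih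
    intro b e1 e2
    rw [eval_imp] at e1 e2 ⊢
    intro hall
    show propEval b (Form.K a (bigAnd (ψ :: l)))
    have hc : propEval b (bigAnd (ψ :: l) ) = propEval b (Form.and ψ (bigAnd l)) := rfl
    have hm : propEval b (bigAnd ((ψ :: l).map (Form.K a)))
        = propEval b (Form.and (Form.K a ψ) (bigAnd (l.map (Form.K a)))) := rfl
    rw [hm] at hall
    obtain ⟨hk, hl⟩ := hall
    have := e1 hk
    rw [eval_imp] at this
    have := this (e2 hl)
    rw [show (Form.K a (Form.and ψ (bigAnd l)) : F) = Form.K a (bigAnd (ψ :: l)) from rfl] at this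
    exact this

/-- Key lemma for the existence part of the truth lemma: if `Γ` is an MCS not containing
`K a φ`, then `{ψ | K a ψ ∈ Γ} ∪ {¬φ}` is consistent. -/
lemma consistent_neg_theory {Γ : Set F} (hΓ : MCS Γ) {a : A} {φ : F}
    (h : Form.K a φ ∉ Γ) : Consistent (insert (Form.neg φ) {ψ | Form.K a ψ ∈ Γ}) := by
  intro hcon
  have hneg := provFrom_neg_of_inconsistent
    (Γ := {ψ | Form.K a ψ ∈ Γ}) (φ := Form.neg φ) (fun hc => hc hcon)
  obtain ⟨l, hl, hp⟩ := hneg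
  -- hp : Prov (bigAnd l → ¬¬φ)
  have hKl : Prov ((bigAnd (l.map (Form.K a))).imp (Form.K a (Form.neg (Form.neg φ)))) := by
    have h1 : Prov (Form.K a ((bigAnd l).imp (Form.neg (Form.neg φ)))) := Prov.nec a hp
    have h2 := Prov.mp (Prov.axK a (bigAnd l) (Form.neg (Form.neg φ))) h1
    have h3 := prov_bigAnd_K a l
    apply taut_mp2 h2 h3
    intro b e1 e2
    rw [eval_imp] at e1 e2 ⊢
    exact fun hh => e1 (e2 hh)
  -- each K a ψ for ψ ∈ l is in Γ, so bigAnd (l.map K) "in" Γ, so K ¬¬φ ∈ Γ, so K φ ∈ Γ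
  have hKnn : Form.K a (Form.neg (Form.neg φ)) ∈ Γ := by
    apply hΓ.closed
    apply provFrom_mp (provFrom_of_prov hKl)
    -- ProvFrom Γ (bigAnd (l.map K))
    refine ⟨l.map (Form.K a), ?_, provImp (fun b e => e)⟩
    intro ψ hψ
    obtain ⟨χ, hχ, rfl⟩ := List.mem_map.1 hψ
    exact hl χ hχ
  have hKφ : Form.K a φ ∈ Γ := by
    apply hΓ.closed
    apply provFrom_mp _ (provFrom_mem hKnn)
    apply provFrom_of_prov
    have t : Prov (Form.K a ((Form.neg (Form.neg φ)).imp φ)) :=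
      Prov.nec a (Prov.taut (fun b => by
        rw [eval_imp]
        show ¬¬ propEval b φ → propEval b φ
        exact not_not.1))
    apply taut_mp (Prov.mp (Prov.axK a _ _) t)
    exact fun b e => e
  exact h hKφ

/-! ### Canonical Kripke structure on maximal consistent sets -/

/-- The type of maximal consistent sets. -/
def CState (A Val : Type) [Inhabited (A × Val)] : Type :=
  {Γ : Set (Form A (A × Val)) // MCS Γ}

/-- Canonical accessibility. -/
def crel (a : A) (s t : CState A Val) : Prop :=
  ∀ φ : F, Form.K a φ ∈ s.1 → φ ∈ t.1

lemma crel_refl (a : A) (s : CState A Val) : crel a s s := by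
  intro φ hφ
  exact s.2.closed (provFrom_mp (provFrom_of_prov (Prov.axT a φ)) (provFrom_mem hφ))

lemma crel_K_mem {a : A} {s t : CState A Val} (h : crel a s t) {φ : F}
    (hφ : Form.K a φ ∈ s.1) : Form.K a φ ∈ t.1 := by
  apply h
  exact s.2.closed (provFrom_mp (provFrom_of_prov (Prov.ax4 a φ)) (provFrom_mem hφ))

lemma crel_symm (a : A) {s t : CState A Val} (h : crel a s t) : crel a t s := by
  intro φ hφ
  by_contra hns
  -- φ ∉ s; show K a φ ∉ s, hence ¬ K a φ ∈ s, hence K ¬K φ ∈ s, hence ¬K φ ∈ t: contra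
  have hKs : Form.K a φ ∉ s.1 := by
    intro hK
    exact hns (s.2.closed (provFrom_mp (provFrom_of_prov (Prov.axT a φ)) (provFrom_mem hK)))
  have hnK : Form.neg (Form.K a φ) ∈ s.1 := s.2.neg_mem_iff.2 hKs
  have h5 : Form.K a (Form.neg (Form.K a φ)) ∈ s.1 :=
    s.2.closed (provFrom_mp (provFrom_of_prov (Prov.ax5 a φ)) (provFrom_mem hnK))
  have : Form.neg (Form.K a φ) ∈ t.1 := h _ h5
  exact t.2.not_both hφ this

lemma crel_trans (a : A) {s t u : CState A Val} (h1 : crel a s t) (h2 : crel a t u) :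
    crel a s u := fun φ hφ => h2 φ (crel_K_mem h1 hφ)

lemma crel_equiv (a : A) : Equivalence (crel (Val := Val) a) :=
  ⟨crel_refl a, crel_symm a, crel_trans a⟩

/-- Atoms about agent `a` are invariant along `crel a` (from the locality axiom). -/
lemma crel_atom {a : A} {x : Val} {s t : CState A Val} (h : crel a s t)
    (hx : Form.atom (a, x) ∈ s.1) : Form.atom (a, x) ∈ t.1 := by
  have hloc : (Form.K a (Form.atom (a, x))).or (Form.K a (Form.neg (Form.atom (a, x)))) ∈ s.1 :=
    s.2.mem_of_prov (Prov.axLoc a x)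
  have hcases : Form.K a (Form.atom (a, x)) ∈ s.1 ∨
      Form.K a (Form.neg (Form.atom (a, x))) ∈ s.1 := by
    rcases s.2.2 (Form.K a (Form.atom (a, x))) with h1 | h1
    · exact Or.inl h1
    · right
      apply s.2.closed
      apply provFrom_mp _ (provFrom_mem h1)
      apply provFrom_mp _ (provFrom_mem hloc)
      apply provFrom_of_prov
      apply Prov.taut
      intro b
      rw [eval_imp, eval_imp, eval_or]
      show _ → ¬ _ → _
      tauto
  rcases hcases with h1 | h1
  · exact h _ h1
  · exfalso
    have : Form.neg (Form.atom (a, x)) ∈ s.1 :=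
      s.2.closed (provFrom_mp (provFrom_of_prov (Prov.axT a _)) (provFrom_mem h1))
    exact s.2.not_both hx this

end Modal
end S7
namespace S7
section Canonical

variable {n : ℕ} {Val : Type} [Inhabited Val]

local notation "F" => Form (Fin (n+1)) (Fin (n+1) × Val)
local notation "S" => CState (Fin (n+1)) Val

def csetoid (a : Fin (n+1)) : Setoid (CState (Fin (n+1)) Val) :=
  ⟨crel a, crel_equiv a⟩

/-- Vertices of the canonical simplicial model. -/
def CV (n : ℕ) (Val : Type) [Inhabited Val] : Type :=
  Σ a : Fin (n+1), Quotient (csetoid (Val := Val) a)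

/-- The canonical facet of a maximal consistent set. -/
def Fc (s : S) : Set (CV n Val) :=
  Set.range (fun a : Fin (n+1) => ⟨a, Quotient.mk (csetoid a) s⟩)

lemma Fc_inj_fun (s : S) :
    Function.Injective (fun a : Fin (n+1) => (⟨a, Quotient.mk (csetoid a) s⟩ : CV n Val)) := by
  intro a b hab
  exact (Sigma.mk.inj_iff.1 hab).1

lemma ncard_Fc (s : S) : (Fc (n := n) s).ncard = n + 1 := by
  show (Set.range (fun a : Fin (n+1) => (⟨a, Quotient.mk (csetoid a) s⟩ : CV n Val))).ncard = n + 1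
  rw [← Set.image_univ, Set.ncard_image_of_injective _ (Fc_inj_fun s),
    Set.ncard_univ]
  simp

lemma Fc_finite (s : S) : (Fc (n := n) s).Finite := Set.finite_range _

lemma mem_Fc_color {s : S} {v : CV n Val} (hv : v ∈ Fc s) {a : Fin (n+1)} (ha : v.1 = a) :
    v = ⟨a, Quotient.mk (csetoid a) s⟩ := by
  obtain ⟨b, rfl⟩ := hv
  cases ha
  rfl

/-- The canonical simplicial model. -/
def canonM (n : ℕ) (Val : Type) [Inhabited Val] : SModel (Fin (n+1)) (CV n Val) Val where
  simplexes := {X | X.Nonempty ∧ ∃ s : CState (Fin (n+1)) Val, X ⊆ Fc s}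
  nonempty_mem := fun _ hX => hX.1
  finite_mem := fun X hX => by
    obtain ⟨s, hs⟩ := hX.2
    exact (Fc_finite s).subset hs
  down_closed := fun X hX Y hYX hYne => by
    obtain ⟨s, hs⟩ := hX.2
    exact ⟨hYne, s, hYX.trans hs⟩
  color := fun v => v.1
  chromatic := fun X hX => by
    obtain ⟨s, hs⟩ := hX.2
    intro v hv w hw hc
    have hc' : v.1 = w.1 := hc
    rw [mem_Fc_color (hs hv) rfl, mem_Fc_color (hs hw) rfl, hc']
  label := fun v => {p | p.1 = v.1 ∧ ∃ s : CState (Fin (n+1)) Val,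
    Quotient.mk (csetoid v.1) s = v.2 ∧ Form.atom p ∈ s.1}
  label_local := fun v _ p hp => hp.1

lemma Fc_mem_simplexes (s : S) : Fc (n := n) s ∈ (canonM n Val).simplexes :=
  ⟨⟨_, ⟨0, rfl⟩⟩, s, subset_rfl⟩

lemma ncard_le_of_simplex {X : Set (CV n Val)} (hX : X ∈ (canonM n Val).simplexes) :
    X.ncard ≤ n + 1 := by
  obtain ⟨t, ht⟩ := hX.2
  calc X.ncard ≤ (Fc t).ncard := Set.ncard_le_ncard ht (Fc_finite t)
    _ = n + 1 := ncard_Fc t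

lemma Fc_facet (s : S) : (canonM n Val).toCSC.IsFacet (Fc s) := by
  refine ⟨Fc_mem_simplexes s, fun Y hY hXY => ?_⟩
  apply Set.eq_of_subset_of_ncard_le hXY _ ((canonM n Val).finite_mem Y hY)
  rw [ncard_Fc]
  exact ncard_le_of_simplex hY

lemma facet_iff {X : Set (CV n Val)} :
    (canonM n Val).toCSC.IsFacet X ↔ ∃ s : S, X = Fc s := by
  constructor
  · intro hX
    obtain ⟨s, hs⟩ := hX.1.2
    exact ⟨s, hX.2 (Fc s) (Fc_mem_simplexes s) hs⟩
  · rintro ⟨s, rfl⟩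
    exact Fc_facet s

lemma canonM_pure : (canonM n Val).toCSC.Pure n := by
  intro X hX
  obtain ⟨s, rfl⟩ := facet_iff.1 hX
  exact ncard_Fc s

lemma crel_atom' {p : Fin (n+1) × Val} {s t : S} (h : crel p.1 s t)
    (hx : Form.atom p ∈ s.1) : Form.atom p ∈ t.1 := by
  obtain ⟨a, x⟩ := p
  exact crel_atom h hx

/-- Shared `a`-colored vertex between canonical facets iff canonically related. -/
lemma shared_iff {s t : S} {a : Fin (n+1)} :
    (∃ v : CV n Val, v ∈ Fc s ∩ Fc t ∧ v.1 = a) ↔ crel a s t := by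
  constructor
  · rintro ⟨v, ⟨hvs, hvt⟩, ha⟩
    have h1 := mem_Fc_color hvs ha
    have h2 := mem_Fc_color hvt ha
    rw [h1] at h2
    have := (Sigma.mk.inj_iff.1 h2).2
    exact Quotient.exact (eq_of_heq this)
  · intro h
    refine ⟨⟨a, Quotient.mk (csetoid a) s⟩, ⟨⟨a, rfl⟩, ?_⟩, rfl⟩
    have : Quotient.mk (csetoid a) s = Quotient.mk (csetoid a) t := Quotient.sound h
    rw [this]
    exact ⟨a, rfl⟩

/-- The truth lemma. -/
lemma truth_lemma (φ : F) (s : S) : (canonM n Val).sat (Fc s) φ ↔ φ ∈ s.1 := by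
  induction φ generalizing s with
  | atom p =>
    show (∃ v ∈ Fc s, p ∈ (canonM n Val).label v) ↔ _
    constructor
    · rintro ⟨v, hv, hp1, t, ht, hatom⟩
      have hv' := mem_Fc_color hv rfl
      rw [hv'] at ht
      have := (Sigma.mk.inj_iff.1 (congrArg (fun q => (⟨v.1, q⟩ : CV n Val)) ht)).2
      have hrel : crel v.1 t s := Quotient.exact ht
      rw [← hp1] at hrel
      exact crel_atom' hrel hatom
    · intro hp
      exact ⟨⟨p.1, Quotient.mk (csetoid p.1) s⟩, ⟨p.1, rfl⟩, rfl, s, rfl, hp⟩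
  | neg φ ih =>
    show ¬ (canonM n Val).sat (Fc s) φ ↔ _
    rw [ih, ← s.2.neg_mem_iff]
  | and φ ψ ih1 ih2 =>
    show ((canonM n Val).sat (Fc s) φ ∧ (canonM n Val).sat (Fc s) ψ) ↔ _
    rw [ih1, ih2, s.2.and_mem_iff]
  | K a φ ih =>
    constructor
    · intro hsat
      by_contra hK
      have hcons := consistent_neg_theory s.2 hK
      obtain ⟨Δ, hsub, hΔ⟩ := lindenbaum hcons
      set t : S := ⟨Δ, hΔ⟩
      have hrel : crel a s t := fun ψ hψ => hsub (Set.mem_insert_iff.2 (Or.inr hψ))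
      have hsatt : (canonM n Val).sat (Fc t) φ :=
        hsat (Fc t) (Fc_facet t) (shared_iff.2 hrel)
      have : φ ∈ Δ := (ih t).1 hsatt
      exact hΔ.not_both this (hsub (Set.mem_insert _ _))
    · intro hK Y hY hshared
      obtain ⟨t, rfl⟩ := facet_iff.1 hY
      have hrel : crel a s t := shared_iff.1 hshared
      exact (ih t).2 (hrel φ hK)

end Canonical
end S7
/-- Completeness of `S5_n + Loc` with respect to the class of simplicial
models: every formula true at every facet of every simplicial model is derivable. -/
theorem statement7 {n : ℕ} {Val : Type} [Countable Val]
    (φ : Form (Fin (n+1)) (Fin (n+1) × Val))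
    (h : ∀ (V : Type) (M : SModel (Fin (n+1)) V Val), M.toCSC.Pure n →
      ∀ X : Set V, M.toCSC.IsFacet X → M.sat X φ) :
    Prov φ := by
  rcases isEmpty_or_nonempty Val with hV | hV
  · exact (hV.false (S7.someAtom φ).2).elim
  · letI : Inhabited Val := Classical.inhabited_of_nonempty hV
    by_contra hφ
    have hcons : S7.Consistent {Form.neg φ} := by
      rintro ⟨l, hl, hp⟩
      apply hφ
      apply S7.taut_mp hp
      intro b e
      rw [S7.eval_imp, S7.eval_falsum] at e
      by_contra hb
      apply e
      rw [S7.eval_bigAnd]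
      intro ψ hψ
      have hm := hl ψ hψ
      rw [Set.mem_singleton_iff] at hm
      subst hm
      exact hb
    obtain ⟨Δ, hsub, hΔ⟩ := S7.lindenbaum hcons
    set s : S7.CState (Fin (n+1)) Val := ⟨Δ, hΔ⟩
    have hneg : Form.neg φ ∈ Δ := hsub rfl
    have hsat := h _ (S7.canonM n Val) S7.canonM_pure (S7.Fc s) (S7.Fc_facet s)
    have hmem := (S7.truth_lemma φ s).1 hsat
    exact hΔ.not_both hmem hneg
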